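/- Let A be an abelian category with enough injectives and let (W₁, F₁), (W₂, F₂), (W₃, F₃) be three injective cotorsion pairs such that F₂ ⊆ F₁ and F₃ ⊆ F₁. Then W₃ ∩ F₁ = F₂ if and only if both W₂ ∩ W₃ = W₁ and F₂ ⊆ W₃. -/
import Mathlib


open CategoryTheory CategoryTheory.Limits

universe w v u

variable {A : Type u} [Category.{v} A] [Abelian A]

/-- `IsShortExact i p` asserts that `0 → X → Y → Z → 0` is a short exact sequence. -/
def IsShortExact {X Y Z : A} (i : X ⟶ Y) (p : Y ⟶ Z) : Prop :=
  ∃ w : i ≫ p = 0, (ShortComplex.mk i p w).ShortExact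

section Ext

variable [HasExt.{w} A]

/-- `Ext¹(X, Y) = 0`. -/
def Ext1Zero (X Y : A) : Prop := Subsingleton (Abelian.Ext X Y 1)

/-- `(F, C)` is a cotorsion pair: each class is the `Ext¹`-orthogonal of the other. -/
def IsCotorsionPair (F C : Set A) : Prop :=
  (∀ X : A, X ∈ F ↔ ∀ Y ∈ C, Ext1Zero.{w} X Y) ∧
  (∀ Y : A, Y ∈ C ↔ ∀ X ∈ F, Ext1Zero.{w} X Y)

/-- A complete cotorsion pair: for every object `X` there are short exact sequences
`0 → C → F → X → 0` and `0 → X → C' → F' → 0` with `F, F'` in the left class and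
`C, C'` in the right class. -/
def IsCompleteCotorsionPair (F C : Set A) : Prop :=
  IsCotorsionPair.{w} F C ∧
  (∀ X : A, ∃ (Co Fo : A) (i : Co ⟶ Fo) (p : Fo ⟶ X),
    Co ∈ C ∧ Fo ∈ F ∧ IsShortExact i p) ∧
  (∀ X : A, ∃ (Co Fo : A) (i : X ⟶ Co) (p : Co ⟶ Fo),
    Co ∈ C ∧ Fo ∈ F ∧ IsShortExact i p)

end Ext

/-- A thick class: closed under direct summands (retracts) and satisfying two-out-of-three
for short exact sequences. -/
def IsThickClass (W : Set A) : Prop :=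
  (∀ (X Y : A) (s : Y ⟶ X) (r : X ⟶ Y), s ≫ r = 𝟙 Y → X ∈ W → Y ∈ W) ∧
  (∀ ⦃X Y Z : A⦄ (i : X ⟶ Y) (p : Y ⟶ Z), IsShortExact i p →
    (X ∈ W → Y ∈ W → Z ∈ W) ∧ (X ∈ W → Z ∈ W → Y ∈ W) ∧ (Y ∈ W → Z ∈ W → X ∈ W))

/-- The class `F` is closed under kernels of epimorphisms between objects of `F`. -/
def ClosedUnderKernelsOfEpis (F : Set A) : Prop :=
  ∀ ⦃X Y Z : A⦄ (i : X ⟶ Y) (p : Y ⟶ Z), IsShortExact i p → Y ∈ F → Z ∈ F → X ∈ F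

/-- The class `C` is closed under cokernels of monomorphisms between objects of `C`. -/
def ClosedUnderCokernelsOfMonos (C : Set A) : Prop :=
  ∀ ⦃X Y Z : A⦄ (i : X ⟶ Y) (p : Y ⟶ Z), IsShortExact i p → X ∈ C → Y ∈ C → Z ∈ C

/-- An injective cotorsion pair: a complete cotorsion pair `(W, F)` with `W` thick and
`W ∩ F` equal to the class of injective objects. -/
def IsInjectiveCotorsionPair [HasExt.{w} A] (W F : Set A) : Prop :=
  IsCompleteCotorsionPair.{w} W F ∧ IsThickClass W ∧
  ∀ X : A, (X ∈ W ∧ X ∈ F) ↔ Injective X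

/-- A projective cotorsion pair: a complete cotorsion pair `(C, W)` with `W` thick and
`C ∩ W` equal to the class of projective objects. -/
def IsProjectiveCotorsionPair [HasExt.{w} A] (C W : Set A) : Prop :=
  IsCompleteCotorsionPair.{w} C W ∧ IsThickClass W ∧
  ∀ X : A, (X ∈ C ∧ X ∈ W) ↔ Projective X

/-- A Hovey triple `(Q, W, R)`: `W` is thick and both `(Q, W ∩ R)` and `(Q ∩ W, R)` are
complete cotorsion pairs. -/
def IsHoveyTriple [HasExt.{w} A] (Q W R : Set A) : Prop :=
  IsThickClass W ∧ IsCompleteCotorsionPair.{w} Q (W ∩ R) ∧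
    IsCompleteCotorsionPair.{w} (Q ∩ W) R

theorem recollement_conditions_equivalent [EnoughInjectives A] [HasExt.{w} A]
    (W₁ F₁ W₂ F₂ W₃ F₃ : Set A)
    (h1 : IsInjectiveCotorsionPair.{w} W₁ F₁)
    (h2 : IsInjectiveCotorsionPair.{w} W₂ F₂)
    (h3 : IsInjectiveCotorsionPair.{w} W₃ F₃)
    (h21 : F₂ ⊆ F₁) (h31 : F₃ ⊆ F₁) :
    W₃ ∩ F₁ = F₂ ↔ (W₂ ∩ W₃ = W₁ ∧ F₂ ⊆ W₃) := by
  obtain ⟨⟨hc1, hseq1, _⟩, ht1, hinj1⟩ := h1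
  obtain ⟨⟨hc2, _, hseq2⟩, ht2, hinj2⟩ := h2
  obtain ⟨⟨hc3, _, _⟩, ht3, hinj3⟩ := h3
  -- F₂ ⊆ F₁ implies W₁ ⊆ W₂, and F₃ ⊆ F₁ implies W₁ ⊆ W₃
  have hW12 : W₁ ⊆ W₂ := fun X hX =>
    (hc2.1 X).2 (fun Y hY => ((hc1.1 X).1 hX) Y (h21 hY))
  have hW13 : W₁ ⊆ W₃ := fun X hX =>
    (hc3.1 X).2 (fun Y hY => ((hc1.1 X).1 hX) Y (h31 hY))
  constructor
  · intro hW3F1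
    refine ⟨Set.Subset.antisymm ?_ (fun X hX => ⟨hW12 hX, hW13 hX⟩),
      fun X hX => (show X ∈ W₃ ∩ F₁ from hW3F1 ▸ hX).1⟩
    rintro X ⟨hX2, hX3⟩
    obtain ⟨Co, Fo, i, p, hCo, hFo, w, hSE⟩ := hseq1 X
    -- `0 → Co → Fo → X → 0` with `Co ∈ F₁`, `Fo ∈ W₁`
    have hCoW3 : Co ∈ W₃ := ((ht3.2 i p ⟨w, hSE⟩).2.2) (hW13 hFo) hX3
    have hCoF2 : Co ∈ F₂ := hW3F1 ▸ (⟨hCoW3, hCo⟩ : Co ∈ W₃ ∩ F₁)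
    -- the extension class of the sequence vanishes since `X ∈ W₂`, `Co ∈ F₂`
    have hext : hSE.extClass = 0 := by
      have hz : Ext1Zero.{w} X Co := ((hc2.1 X).1 hX2) Co hCoF2
      exact @Subsingleton.elim _ hz _ _
    apply (hc1.1 X).2
    intro Y hY
    have hzero : ∀ e : Abelian.Ext X Y 1, e = 0 := by
      intro e
      have h0 : (Abelian.Ext.mk₀ p).comp e (zero_add 1) = 0 := by
        have hz : Ext1Zero.{w} Fo Y := ((hc1.1 Fo).1 hFo) Y hY
        exact @Subsingleton.elim _ hz _ _
      obtain ⟨x₁, hx₁⟩ :=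
        Abelian.Ext.contravariant_sequence_exact₃ hSE Y e h0 (add_zero 1)
      rw [hext, Abelian.Ext.zero_comp] at hx₁
      exact hx₁.symm
    exact ⟨fun a b => (hzero a).trans (hzero b).symm⟩
  · rintro ⟨hW, hF2W3⟩
    refine Set.Subset.antisymm ?_ (fun X hX => ⟨hF2W3 hX, h21 hX⟩)
    rintro X ⟨hX3, hX1⟩
    obtain ⟨Co, Fo, i, p, hCo, hFo, w, hSE⟩ := hseq2 X
    -- `0 → X → Co → Fo → 0` with `Co ∈ F₂`, `Fo ∈ W₂`
    have hFoW3 : Fo ∈ W₃ := ((ht3.2 i p ⟨w, hSE⟩).1) hX3 (hF2W3 hCo)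
    have hFoW1 : Fo ∈ W₁ := hW ▸ (⟨hFo, hFoW3⟩ : Fo ∈ W₂ ∩ W₃)
    -- the extension class vanishes since `Fo ∈ W₁`, `X ∈ F₁`
    have hext : hSE.extClass = 0 := by
      have hz : Ext1Zero.{w} Fo X := ((hc1.1 Fo).1 hFoW1) X hX1
      exact @Subsingleton.elim _ hz _ _
    apply (hc2.2 X).2
    intro W' hW'
    have hzero : ∀ e : Abelian.Ext W' X 1, e = 0 := by
      intro e
      have h0 : e.comp (Abelian.Ext.mk₀ i) (add_zero 1) = 0 := by
        have hz : Ext1Zero.{w} W' Co := ((hc2.1 W').1 hW') Co hCo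
        exact @Subsingleton.elim _ hz _ _
      obtain ⟨x₃, hx₃⟩ :=
        Abelian.Ext.covariant_sequence_exact₁ W' hSE e h0 (zero_add 1)
      rw [hext, Abelian.Ext.comp_zero] at hx₃
      exact hx₃.symm
    exact ⟨fun a b => (hzero a).trans (hzero b).symm⟩
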